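/- arXiv:1910.03210 — 2 statements merged into one kernel-verified Lean document; each statement's English description precedes it below -/
import Mathlib

section
/- Evasion of two blocked corner nodes of the same first-order subcurve: for every N ≥ 2 and every blocked set B = {n_1, n_2} with 1 ≤ n_1, n_2 = n_1 + 3 ≤ 4^N−2, and n_1 mod 4 = 0 (so n_1 and n_2 are the entry and exit corner nodes of a single first-order subcurve), an evasion tour exists. -/
/-- The `N`-th order approximated Hilbert curve, mapping indices `{0,...,4^N-1}`
to nodes of the grid `{0,...,2^N-1} × {0,...,2^N-1} ⊆ ℤ × ℤ`. -/
def hilbert : ℕ → ℕ → ℤ × ℤ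
  | 0, _ => (0, 0)
  | 1, i =>
    if i = 0 then (0, 0)
    else if i = 1 then (0, 1)
    else if i = 2 then (1, 1)
    else (1, 0)
  | N + 2, i =>
    let q := i / 4 ^ (N + 1)
    let s : ℤ := 2 ^ (N + 1)
    let p := hilbert (N + 1) (i % 4 ^ (N + 1))
    if q = 0 then (p.2, p.1)
    else if q = 1 then (p.1, p.2 + s)
    else if q = 2 then (p.1 + s, p.2 + s)
    else (2 * s - 1 - p.2, s - 1 - p.1)

/-- Euclidean distance between two points of `ℤ × ℤ`. -/
noncomputable def euclDist (a b : ℤ × ℤ) : ℝ :=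
  Real.sqrt (((a.1 - b.1 : ℤ) : ℝ) ^ 2 + ((a.2 - b.2 : ℤ) : ℝ) ^ 2)

/-- Two points of `ℤ × ℤ` are edge connected if their Euclidean distance equals 1. -/
def EdgeConnected (a b : ℤ × ℤ) : Prop := euclDist a b = 1

/-- Two points of `ℤ × ℤ` are vertex connected if both coordinates differ by exactly 1. -/
def VertexConnected (a b : ℤ × ℤ) : Prop := |a.1 - b.1| = 1 ∧ |a.2 - b.2| = 1

/-- Membership in the grid `{0,...,2^N-1} × {0,...,2^N-1}`. -/
def InGrid (N : ℕ) (p : ℤ × ℤ) : Prop :=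
  0 ≤ p.1 ∧ p.1 ≤ 2 ^ N - 1 ∧ 0 ≤ p.2 ∧ p.2 ≤ 2 ^ N - 1

/-- The closed segment from `u` to `v` (centres of cells, viewed in `ℝ²`) is disjoint
from the open unit cell centred at `c`. -/
def SegAvoidsCell (u v c : ℤ × ℤ) : Prop :=
  ∀ t : ℝ, t ∈ Set.Icc (0 : ℝ) 1 →
    ¬ (|(1 - t) * (u.1 : ℝ) + t * (v.1 : ℝ) - (c.1 : ℝ)| < 1 / 2 ∧
       |(1 - t) * (u.2 : ℝ) + t * (v.2 : ℝ) - (c.2 : ℝ)| < 1 / 2)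

/-- An evasion tour for the blocked index set `B` on the `N`-th order Hilbert grid:
a sequence of waypoints `w 0, ..., w m` in the grid, starting at the entry node,
ending at the exit node, avoiding all blocked nodes, covering every unblocked grid
point, and whose straight-line segments avoid the interiors of all blocked cells. -/
def IsEvasionTour (N : ℕ) (B : Finset ℕ) (m : ℕ) (w : ℕ → ℤ × ℤ) : Prop :=
  w 0 = hilbert N 0 ∧
  w m = hilbert N (4 ^ N - 1) ∧
  (∀ j ≤ m, InGrid N (w j)) ∧
  (∀ j ≤ m, ∀ b ∈ B, w j ≠ hilbert N b) ∧
  (∀ p : ℤ × ℤ, InGrid N p → (∀ b ∈ B, p ≠ hilbert N b) → ∃ j ≤ m, w j = p) ∧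
  (∀ j < m, ∀ b ∈ B, SegAvoidsCell (w j) (w (j + 1)) (hilbert N b))

lemma nat_divmod (e a b : ℕ) (hb : b < e) : (a * e + b) / e = a ∧ (a * e + b) % e = b := by
  have he : 0 < e := by omega
  constructor
  · rw [add_comm, Nat.add_mul_div_right _ _ he, Nat.div_eq_of_lt hb]; omega
  · rw [add_comm, Nat.add_mul_mod_self_right, Nat.mod_eq_of_lt hb]

lemma hilbert_zero : ∀ N, hilbert N 0 = (0, 0)
  | 0 => rfl
  | 1 => rfl
  | (N + 2) => by
      simp [hilbert, hilbert_zero (N + 1)]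

lemma hilbert_last : ∀ N, 1 ≤ N → hilbert N (4 ^ N - 1) = (2 ^ N - 1, 0)
  | 1, _ => by norm_num [hilbert]
  | (N + 2), _ => by
      have IH := hilbert_last (N + 1) (by omega)
      have h4 : (0:ℕ) < 4 ^ (N + 1) := pow_pos (by norm_num) _
      have hsplit : 4 ^ (N + 2) - 1 = 3 * 4 ^ (N + 1) + (4 ^ (N + 1) - 1) := by
        have : 4 ^ (N + 2) = 4 * 4 ^ (N + 1) := by ring
        omega
      obtain ⟨hdiv, hmod⟩ := nat_divmod (4 ^ (N + 1)) 3 (4 ^ (N + 1) - 1) (by omega)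
      rw [hsplit] at *
      show hilbert (N + 2) _ = _
      simp only [hilbert, hdiv, hmod, IH]
      norm_num
      ring

lemma hilbert_grid : ∀ N, ∀ i, InGrid N (hilbert N i)
  | 0, i => by norm_num [hilbert, InGrid]
  | 1, i => by
      simp only [hilbert, InGrid]
      split_ifs <;> norm_num
  | (N + 2), i => by
      have hp := hilbert_grid (N + 1) (i % 4 ^ (N + 1))
      have hS : (1:ℤ) ≤ 2 ^ (N + 1) := by exact_mod_cast Nat.one_le_two_pow
      have hSS : (2:ℤ) ^ (N + 2) = 2 * 2 ^ (N + 1) := by ring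
      show InGrid (N + 2) (hilbert (N + 2) i)
      simp only [hilbert, InGrid] at hp ⊢
      rw [hSS]
      set p := hilbert (N + 1) (i % 4 ^ (N + 1)) with hpd
      clear_value p
      obtain ⟨p1, p2⟩ := p
      simp only [] at hp ⊢
      obtain ⟨g1, g2, g3, g4⟩ := hp
      set S := (2:ℤ) ^ (N + 1) with hSd
      clear_value S
      split_ifs <;> refine ⟨?_, ?_, ?_, ?_⟩ <;> simp only [] <;> omega

def Adj (u v : ℤ × ℤ) : Prop :=
  (u.1 = v.1 ∧ (u.2 = v.2 + 1 ∨ v.2 = u.2 + 1)) ∨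
  (u.2 = v.2 ∧ (u.1 = v.1 + 1 ∨ v.1 = u.1 + 1))

lemma hilbert_pair : ∀ N, 1 ≤ N → ∀ k, 4 * k + 3 < 4 ^ N →
    Adj (hilbert N (4 * k)) (hilbert N (4 * k + 3))
  | 0, h => by simp at h
  | 1, _ => by
      intro k hk
      have : k = 0 := by omega
      subst this
      simp [hilbert, Adj]
  | (N + 2), _ => by
      intro k hk
      have h4 : (0:ℕ) < 4 ^ N := pow_pos (by norm_num) _
      have hpow1 : (4:ℕ) ^ (N + 1) = 4 * 4 ^ N := by ring
      obtain ⟨q, k', hk'lt, rfl⟩ : ∃ q k', k' < 4 ^ N ∧ k = q * 4 ^ N + k' :=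
        ⟨k / 4 ^ N, k % 4 ^ N, Nat.mod_lt _ h4, by
          rw [mul_comm]; exact (Nat.div_add_mod k (4 ^ N)).symm⟩
      have e1 : 4 * (q * 4 ^ N + k') = q * 4 ^ (N + 1) + 4 * k' := by
        rw [hpow1]; ring
      have e2 : 4 * (q * 4 ^ N + k') + 3 = q * 4 ^ (N + 1) + (4 * k' + 3) := by
        rw [hpow1]; ring
      have d1 : (4 * (q * 4 ^ N + k')) / 4 ^ (N + 1) = q := by
        rw [e1]; exact (nat_divmod _ _ _ (by omega)).1
      have m1 : (4 * (q * 4 ^ N + k')) % 4 ^ (N + 1) = 4 * k' := by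
        rw [e1]; exact (nat_divmod _ _ _ (by omega)).2
      have d2 : (4 * (q * 4 ^ N + k') + 3) / 4 ^ (N + 1) = q := by
        rw [e2]; exact (nat_divmod _ _ _ (by omega)).1
      have m2 : (4 * (q * 4 ^ N + k') + 3) % 4 ^ (N + 1) = 4 * k' + 3 := by
        rw [e2]; exact (nat_divmod _ _ _ (by omega)).2
      have IH := hilbert_pair (N + 1) (by omega) k' (by omega)
      show Adj (hilbert (N + 2) _) (hilbert (N + 2) _)
      simp only [hilbert, d1, d2, m1, m2]
      set p := hilbert (N + 1) (4 * k') with hp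
      set p' := hilbert (N + 1) (4 * k' + 3) with hp'
      clear_value p p'
      obtain ⟨p1, p2⟩ := p
      obtain ⟨q1, q2⟩ := p'
      simp only [Adj] at IH ⊢
      split_ifs <;> simp only [] at IH ⊢ <;> omega

lemma hilbert_eq_start : ∀ N, 1 ≤ N → ∀ i, i < 4 ^ N → hilbert N i = (0, 0) → i = 0
  | 0, h => by simp at h
  | 1, _ => by
      intro i hi
      interval_cases i <;> simp_all [hilbert, Prod.ext_iff] <;> omega
  | (N + 2), _ => by
      intro i hi h
      have h4 : (0:ℕ) < 4 ^ (N + 1) := pow_pos (by norm_num) _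
      have hpow : (4:ℕ) ^ (N + 2) = 4 * 4 ^ (N + 1) := by ring
      obtain ⟨q, r, hrlt, rfl⟩ : ∃ q r, r < 4 ^ (N + 1) ∧ i = q * 4 ^ (N + 1) + r :=
        ⟨i / 4 ^ (N + 1), i % 4 ^ (N + 1), Nat.mod_lt _ h4, by
          rw [mul_comm]; exact (Nat.div_add_mod i (4 ^ (N + 1))).symm⟩
      obtain ⟨hd, hm⟩ := nat_divmod (4 ^ (N + 1)) q r hrlt
      have hg := hilbert_grid (N + 1) r
      have hS : (1:ℤ) ≤ 2 ^ (N + 1) := by exact_mod_cast Nat.one_le_two_pow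
      have hIH := hilbert_eq_start (N + 1) (by omega) r (by omega)
      simp only [hilbert, hd, hm] at h
      simp only [InGrid] at hg
      set p := hilbert (N + 1) r with hp
      clear_value p
      obtain ⟨p1, p2⟩ := p
      obtain ⟨g1, g2, g3, g4⟩ := hg
      dsimp only at g1 g2 g3 g4
      set S := (2:ℤ) ^ (N + 1) with hSd
      clear_value S
      split_ifs at h with h0 h1 h2 <;> simp only [Prod.mk.injEq] at h
      · have hr : r = 0 := hIH (by apply Prod.ext <;> simp <;> omega)
        subst h0
        omega
      · omega
      · omega
      · omega

lemma hilbert_eq_last : ∀ N, 1 ≤ N → ∀ i, i < 4 ^ N →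
    hilbert N i = (2 ^ N - 1, 0) → i = 4 ^ N - 1
  | 0, h => by simp at h
  | 1, _ => by
      intro i hi
      interval_cases i <;> simp_all [hilbert, Prod.ext_iff] <;> omega
  | (N + 2), _ => by
      intro i hi h
      have h4 : (0:ℕ) < 4 ^ (N + 1) := pow_pos (by norm_num) _
      have hpow : (4:ℕ) ^ (N + 2) = 4 * 4 ^ (N + 1) := by ring
      obtain ⟨q, r, hrlt, rfl⟩ : ∃ q r, r < 4 ^ (N + 1) ∧ i = q * 4 ^ (N + 1) + r :=
        ⟨i / 4 ^ (N + 1), i % 4 ^ (N + 1), Nat.mod_lt _ h4, by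
          rw [mul_comm]; exact (Nat.div_add_mod i (4 ^ (N + 1))).symm⟩
      obtain ⟨hd, hm⟩ := nat_divmod (4 ^ (N + 1)) q r hrlt
      have hqlt : q < 4 := by
        by_contra hq
        have hX : 4 * 4 ^ (N + 1) ≤ q * 4 ^ (N + 1) :=
          Nat.mul_le_mul_right _ (by omega)
        omega
      have hg := hilbert_grid (N + 1) r
      have hS : (1:ℤ) ≤ 2 ^ (N + 1) := by exact_mod_cast Nat.one_le_two_pow
      have hSS : (2:ℤ) ^ (N + 2) = 2 * 2 ^ (N + 1) := by ring
      have hIH := hilbert_eq_last (N + 1) (by omega) r (by omega)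
      simp only [hilbert, hd, hm] at h
      rw [hSS] at h
      simp only [InGrid] at hg
      set p := hilbert (N + 1) r with hp
      clear_value p
      obtain ⟨p1, p2⟩ := p
      obtain ⟨g1, g2, g3, g4⟩ := hg
      dsimp only at g1 g2 g3 g4
      set S := (2:ℤ) ^ (N + 1) with hSd
      clear_value S
      split_ifs at h with h0 h1 h2 <;> simp only [Prod.mk.injEq] at h
      · omega
      · omega
      · omega
      · have hq3 : q = 3 := by omega
        have hr : r = 4 ^ (N + 1) - 1 := hIH (by apply Prod.ext <;> simp <;> omega)
        subst hq3
        omega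

lemma seg_aux {a b : ℤ} {t : ℝ} (ht0 : 0 ≤ t) (ht1 : t ≤ 1)
    (hab : |a - b| ≤ 1) (ha : a ≠ 0)
    (hX : |(1 - t) * (a : ℝ) + t * (b : ℝ)| < 1 / 2) : 1 / 2 < t := by
  have hX' := abs_lt.mp hX
  rw [abs_le] at hab
  rcases lt_or_gt_of_ne ha with h | h
  · have hb : b ≤ 0 := by omega
    have ha' : (a : ℝ) ≤ -1 := by
      have h' : a ≤ -1 := by omega
      simpa using (Int.cast_le (R := ℝ)).mpr h'
    have hb' : (b : ℝ) ≤ 0 := by exact_mod_cast hb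
    nlinarith [hX'.1, mul_nonneg ht0 (neg_nonneg.mpr hb'),
      mul_le_mul_of_nonneg_left ha' (by linarith : (0:ℝ) ≤ 1 - t)]
  · have hb : 0 ≤ b := by omega
    have ha' : (1:ℝ) ≤ (a : ℝ) := by exact_mod_cast h
    have hb' : (0:ℝ) ≤ (b : ℝ) := by exact_mod_cast hb
    nlinarith [hX'.2, mul_nonneg ht0 hb',
      mul_le_mul_of_nonneg_left ha' (by linarith : (0:ℝ) ≤ 1 - t)]

lemma seg_aux' {a b : ℤ} {t : ℝ} (ht0 : 0 ≤ t) (ht1 : t ≤ 1)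
    (hab : |a - b| ≤ 1) (hb : b ≠ 0)
    (hX : |(1 - t) * (a : ℝ) + t * (b : ℝ)| < 1 / 2) : t < 1 / 2 := by
  have h := seg_aux (a := b) (b := a) (t := 1 - t) (by linarith) (by linarith)
    (by rw [abs_sub_comm] at hab; exact hab) hb (by
      have : (1 - (1 - t)) * (b : ℝ) + (1 - t) * (a : ℝ)
          = (1 - t) * (a : ℝ) + t * (b : ℝ) := by ring
      rw [this]; exact hX)
  linarith

lemma king_seg (u v c : ℤ × ℤ) (h1 : |u.1 - v.1| ≤ 1) (h2 : |u.2 - v.2| ≤ 1)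
    (hu : u ≠ c) (hv : v ≠ c) : SegAvoidsCell u v c := by
  intro t ht ⟨hx, hy⟩
  obtain ⟨ht0, ht1⟩ := ht
  have ex : ∀ (a b : ℤ), (1 - t) * (a : ℝ) + t * (b : ℝ) - (c.1 : ℝ) * 0 = (1-t)*(a:ℝ) + t*(b:ℝ) := by
    intro a b; ring
  have hx' : |(1 - t) * ((u.1 - c.1 : ℤ) : ℝ) + t * ((v.1 - c.1 : ℤ) : ℝ)| < 1 / 2 := by
    have : ((u.1 - c.1 : ℤ) : ℝ) = (u.1 : ℝ) - (c.1 : ℝ) := by push_cast; ring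
    rw [this]
    have : ((v.1 - c.1 : ℤ) : ℝ) = (v.1 : ℝ) - (c.1 : ℝ) := by push_cast; ring
    rw [this]
    have : (1 - t) * ((u.1 : ℝ) - (c.1:ℝ)) + t * ((v.1:ℝ) - (c.1:ℝ))
        = (1 - t) * (u.1 : ℝ) + t * (v.1 : ℝ) - (c.1 : ℝ) := by ring
    rw [this]; exact hx
  have hy' : |(1 - t) * ((u.2 - c.2 : ℤ) : ℝ) + t * ((v.2 - c.2 : ℤ) : ℝ)| < 1 / 2 := by
    have : ((u.2 - c.2 : ℤ) : ℝ) = (u.2 : ℝ) - (c.2 : ℝ) := by push_cast; ring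
    rw [this]
    have : ((v.2 - c.2 : ℤ) : ℝ) = (v.2 : ℝ) - (c.2 : ℝ) := by push_cast; ring
    rw [this]
    have : (1 - t) * ((u.2 : ℝ) - (c.2:ℝ)) + t * ((v.2:ℝ) - (c.2:ℝ))
        = (1 - t) * (u.2 : ℝ) + t * (v.2 : ℝ) - (c.2 : ℝ) := by ring
    rw [this]; exact hy
  have hd1 : |(u.1 - c.1) - (v.1 - c.1)| ≤ 1 := by
    have : (u.1 - c.1) - (v.1 - c.1) = u.1 - v.1 := by ring
    rw [this]; exact h1
  have hd2 : |(u.2 - c.2) - (v.2 - c.2)| ≤ 1 := by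
    have : (u.2 - c.2) - (v.2 - c.2) = u.2 - v.2 := by ring
    rw [this]; exact h2
  have hune : u.1 - c.1 ≠ 0 ∨ u.2 - c.2 ≠ 0 := by
    by_contra hcon
    push_neg at hcon
    exact hu (Prod.ext (by omega) (by omega))
  have hvne : v.1 - c.1 ≠ 0 ∨ v.2 - c.2 ≠ 0 := by
    by_contra hcon
    push_neg at hcon
    exact hv (Prod.ext (by omega) (by omega))
  have hgt : 1 / 2 < t := by
    rcases hune with h | h
    · exact seg_aux ht0 ht1 hd1 h hx'
    · exact seg_aux ht0 ht1 hd2 h hy'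
  have hlt : t < 1 / 2 := by
    rcases hvne with h | h
    · exact seg_aux' ht0 ht1 hd1 h hx'
    · exact seg_aux' ht0 ht1 hd2 h hy'
  linarith

def Kng (u v : ℤ × ℤ) : Prop := |u.1 - v.1| ≤ 1 ∧ |u.2 - v.2| ≤ 1

def base (N : ℕ) (i : ℕ) : ℤ × ℤ :=
  ((i / 2 ^ N : ℕ),
    if (i / 2 ^ N) % 2 = 0 then ((i % 2 ^ N : ℕ) : ℤ)
    else (2 ^ N - 1 : ℤ) - ((i % 2 ^ N : ℕ) : ℤ))

lemma base_def (N x k : ℕ) (hk : k < 2 ^ N) :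
    base N (x * 2 ^ N + k)
      = ((x : ℤ), if x % 2 = 0 then (k : ℤ) else (2 ^ N - 1 : ℤ) - (k : ℤ)) := by
  obtain ⟨hd, hm⟩ := nat_divmod (2 ^ N) x k hk
  simp only [base, hd, hm]

lemma pow4 (N : ℕ) : (4:ℕ) ^ N = 2 ^ N * 2 ^ N := by
  rw [show (4:ℕ) = 2 * 2 from rfl, mul_pow]

lemma two_pow_even (N : ℕ) (hN : 1 ≤ N) : ∃ T, (2:ℕ) ^ N = 2 * T ∧ 1 ≤ T := by
  refine ⟨2 ^ (N - 1), ?_, Nat.one_le_two_pow⟩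
  rw [← pow_succ']
  congr 1
  omega

lemma decomp (N i : ℕ) (hi : i < 4 ^ N) :
    ∃ x k, x < 2 ^ N ∧ k < 2 ^ N ∧ i = x * 2 ^ N + k := by
  have he : 0 < 2 ^ N := pow_pos (by norm_num) _
  refine ⟨i / 2 ^ N, i % 2 ^ N, ?_, Nat.mod_lt _ he, by
    rw [mul_comm]; exact (Nat.div_add_mod i (2 ^ N)).symm⟩
  rw [Nat.div_lt_iff_lt_mul he]
  rw [pow4] at hi
  exact hi

lemma base_mem (N i : ℕ) (hi : i < 4 ^ N) : InGrid N (base N i) := by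
  obtain ⟨x, k, hx, hk, rfl⟩ := decomp N i hi
  rw [base_def N x k hk]
  simp only [InGrid]
  have h1 : ((2:ℕ) ^ N : ℤ) = 2 ^ N := by push_cast; ring
  split_ifs <;> refine ⟨?_, ?_, ?_, ?_⟩ <;> omega

lemma base_consec (N i : ℕ) (hN : 1 ≤ N) (hi : i + 1 < 4 ^ N) :
    ((base N (i+1)).1 = (base N i).1 ∧
      (((base N i).1 % 2 = 0 ∧ (base N (i+1)).2 = (base N i).2 + 1) ∨
       ((base N i).1 % 2 = 1 ∧ (base N (i+1)).2 = (base N i).2 - 1)))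
    ∨ ((base N (i+1)).1 = (base N i).1 + 1 ∧ (base N (i+1)).2 = (base N i).2 ∧
      (((base N i).1 % 2 = 0 ∧ (base N i).2 = 2 ^ N - 1) ∨
       ((base N i).1 % 2 = 1 ∧ (base N i).2 = 0))) := by
  have h1 : ((2:ℕ) ^ N : ℤ) = 2 ^ N := by push_cast; ring
  obtain ⟨x, k, hx, hk, rfl⟩ := decomp N i (by omega)
  by_cases hke : k + 1 < 2 ^ N
  · have e1 : x * 2 ^ N + k + 1 = x * 2 ^ N + (k + 1) := by ring
    rw [base_def N x k hk, e1, base_def N x (k+1) hke]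
    rcases Nat.even_or_odd x with hpar | hpar
    · have hx2 : x % 2 = 0 := Nat.even_iff.mp hpar
      left
      refine ⟨rfl, Or.inl ⟨?_, ?_⟩⟩
      · show (x:ℤ) % 2 = 0
        omega
      · show (if x % 2 = 0 then ((k+1:ℕ):ℤ) else _) = (if x % 2 = 0 then ((k:ℕ):ℤ) else _) + 1
        rw [if_pos hx2, if_pos hx2]
        push_cast
        ring
    · have hx2 : x % 2 = 1 := Nat.odd_iff.mp hpar
      left
      refine ⟨rfl, Or.inr ⟨?_, ?_⟩⟩
      · show (x:ℤ) % 2 = 1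
        omega
      · show (if x % 2 = 0 then ((k+1:ℕ):ℤ) else (2^N - 1 : ℤ) - ((k+1:ℕ):ℤ))
            = (if x % 2 = 0 then ((k:ℕ):ℤ) else (2^N - 1 : ℤ) - ((k:ℕ):ℤ)) - 1
        rw [if_neg (by omega), if_neg (by omega)]
        push_cast
        ring
  · have hke' : k = 2 ^ N - 1 := by omega
    have he : 0 < 2 ^ N := pow_pos (by norm_num) _
    have e1 : x * 2 ^ N + k + 1 = (x + 1) * 2 ^ N + 0 := by
      subst hke'; ring_nf; omega
    rw [base_def N x k hk, e1, base_def N (x+1) 0 he]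
    rcases Nat.even_or_odd x with hpar | hpar
    · have hx2 : x % 2 = 0 := Nat.even_iff.mp hpar
      have hx2' : (x + 1) % 2 = 1 := by omega
      right
      refine ⟨by show ((x+1:ℕ):ℤ) = (x:ℕ) + 1; push_cast; ring, ?_, Or.inl ⟨?_, ?_⟩⟩
      · show (if (x+1) % 2 = 0 then ((0:ℕ):ℤ) else (2^N - 1 : ℤ) - ((0:ℕ):ℤ))
            = (if x % 2 = 0 then ((k:ℕ):ℤ) else (2^N - 1 : ℤ) - ((k:ℕ):ℤ))
        rw [if_neg (by omega), if_pos hx2]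
        push_cast
        omega
      · show (x:ℤ) % 2 = 0
        omega
      · show (if x % 2 = 0 then ((k:ℕ):ℤ) else (2^N - 1 : ℤ) - ((k:ℕ):ℤ)) = 2 ^ N - 1
        rw [if_pos hx2]
        push_cast
        omega
    · have hx2 : x % 2 = 1 := Nat.odd_iff.mp hpar
      have hx2' : (x + 1) % 2 = 0 := by omega
      right
      refine ⟨by show ((x+1:ℕ):ℤ) = (x:ℕ) + 1; push_cast; ring, ?_, Or.inr ⟨?_, ?_⟩⟩
      · show (if (x+1) % 2 = 0 then ((0:ℕ):ℤ) else (2^N - 1 : ℤ) - ((0:ℕ):ℤ))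
            = (if x % 2 = 0 then ((k:ℕ):ℤ) else (2^N - 1 : ℤ) - ((k:ℕ):ℤ))
        rw [if_pos hx2', if_neg (by omega)]
        push_cast
        omega
      · show (x:ℤ) % 2 = 1
        omega
      · show (if x % 2 = 0 then ((k:ℕ):ℤ) else (2^N - 1 : ℤ) - ((k:ℕ):ℤ)) = 0
        rw [if_neg (by omega)]
        push_cast
        omega

lemma skeleton (N : ℕ) (hN : 1 ≤ N) (c d : ℤ × ℤ)
    (hc0 : c ≠ (0, 0)) (hd0 : d ≠ (0, 0))
    (hc1 : c ≠ ((2:ℤ) ^ N - 1, 0)) (hd1 : d ≠ ((2:ℤ) ^ N - 1, 0))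
    (g : ℤ × ℤ → ℕ → ℤ × ℤ)
    (hgrid : ∀ p, InGrid N p → ∀ k, InGrid N (g p k))
    (hne : ∀ p, InGrid N p → ∀ k, g p k ≠ c ∧ g p k ≠ d)
    (hid : ∀ p, InGrid N p → p ≠ c → p ≠ d → ∀ k, g p k = p)
    (hinner : ∀ p, InGrid N p → ∀ k, Kng (g p k) (g p (k + 1)))
    (hstep : ∀ i, i + 1 < 4 ^ N → Kng (g (base N i) 3) (g (base N (i + 1)) 0)) :
    ∃ (m : ℕ) (w : ℕ → ℤ × ℤ), w 0 = ((0:ℤ), (0:ℤ)) ∧ w m = ((2:ℤ) ^ N - 1, 0) ∧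
      (∀ j ≤ m, InGrid N (w j)) ∧
      (∀ j ≤ m, w j ≠ c ∧ w j ≠ d) ∧
      (∀ p, InGrid N p → p ≠ c → p ≠ d → ∃ j ≤ m, w j = p) ∧
      (∀ j < m, Kng (w j) (w (j + 1))) := by
  have he : 0 < 2 ^ N := pow_pos (by norm_num) _
  have hf : 0 < 4 ^ N := pow_pos (by norm_num) _
  have h1 : ((2:ℕ) ^ N : ℤ) = 2 ^ N := by push_cast; ring
  obtain ⟨T, hT, hT1⟩ := two_pow_even N hN
  have hgz : InGrid N (0, 0) := by
    simp only [InGrid]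
    refine ⟨le_refl _, ?_, le_refl _, ?_⟩ <;> simp <;> omega
  have hlz : InGrid N ((2:ℤ) ^ N - 1, 0) := by
    simp only [InGrid]
    refine ⟨?_, ?_, le_refl _, ?_⟩ <;> simp <;> omega
  refine ⟨4 * 4 ^ N - 1, fun j => g (base N (j / 4)) (j % 4), ?_, ?_, ?_, ?_, ?_, ?_⟩
  · -- start
    have hb : base N 0 = ((0:ℤ), (0:ℤ)) := by
      have := base_def N 0 0 he
      simpa using this
    simp only [Nat.zero_div, Nat.zero_mod, hb]
    exact hid _ hgz (Ne.symm hc0) (Ne.symm hd0) 0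
  · -- end
    have hm4 : (4 * 4 ^ N - 1) / 4 = 4 ^ N - 1 ∧ (4 * 4 ^ N - 1) % 4 = 3 := by omega
    show g (base N ((4 * 4 ^ N - 1) / 4)) ((4 * 4 ^ N - 1) % 4) = _
    rw [hm4.1, hm4.2]
    have hee : (2 ^ N - 1) * 2 ^ N + 2 ^ N = 2 ^ N * 2 ^ N := by
      have : (2 ^ N - 1) + 1 = 2 ^ N := by omega
      calc (2 ^ N - 1) * 2 ^ N + 2 ^ N = ((2 ^ N - 1) + 1) * 2 ^ N := by ring
        _ = 2 ^ N * 2 ^ N := by rw [this]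
    have hi : 4 ^ N - 1 = (2 ^ N - 1) * 2 ^ N + (2 ^ N - 1) := by
      rw [pow4]; omega
    have hpar : (2 ^ N - 1) % 2 = 1 := by omega
    have hb : base N (4 ^ N - 1) = ((2:ℤ) ^ N - 1, 0) := by
      rw [hi, base_def N (2 ^ N - 1) (2 ^ N - 1) (by omega)]
      rw [if_neg (by omega)]
      apply Prod.ext <;> simp <;> push_cast <;> omega
    rw [hb]
    exact hid _ hlz (Ne.symm hc1) (Ne.symm hd1) 3
  · intro j hj
    exact hgrid _ (base_mem N _ (by omega)) _
  · intro j hj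
    exact hne _ (base_mem N _ (by omega)) _
  · -- coverage
    intro p hp hpc hpd
    obtain ⟨g1, g2, g3, g4⟩ := hp
    obtain ⟨x, hxv⟩ : ∃ x : ℕ, (x : ℤ) = p.1 := ⟨p.1.toNat, Int.toNat_of_nonneg g1⟩
    have hx : x < 2 ^ N := by omega
    obtain ⟨k, hkv⟩ : ∃ k : ℕ, (k : ℤ) = (if x % 2 = 0 then p.2 else 2 ^ N - 1 - p.2) := by
      refine ⟨(if x % 2 = 0 then p.2 else 2 ^ N - 1 - p.2).toNat, Int.toNat_of_nonneg ?_⟩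
      split_ifs <;> omega
    have hk : k < 2 ^ N := by
      split_ifs at hkv <;> omega
    refine ⟨4 * (x * 2 ^ N + k), ?_, ?_⟩
    · have hle : x * 2 ^ N ≤ (2 ^ N - 1) * 2 ^ N := Nat.mul_le_mul_right _ (by omega)
      have hee : (2 ^ N - 1) * 2 ^ N + 2 ^ N = 2 ^ N * 2 ^ N := by
        have h' : (2 ^ N - 1) + 1 = 2 ^ N := by omega
        calc (2 ^ N - 1) * 2 ^ N + 2 ^ N = ((2 ^ N - 1) + 1) * 2 ^ N := by ring
          _ = 2 ^ N * 2 ^ N := by rw [h']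
      have := pow4 N
      omega
    · have hd4 : (4 * (x * 2 ^ N + k)) / 4 = x * 2 ^ N + k ∧ (4 * (x * 2 ^ N + k)) % 4 = 0 := by
        omega
      show g (base N (4 * (x * 2 ^ N + k) / 4)) (4 * (x * 2 ^ N + k) % 4) = p
      rw [hd4.1, hd4.2, base_def N x k hk]
      have hbp : ((x : ℤ), if x % 2 = 0 then (k:ℤ) else (2 ^ N - 1 : ℤ) - (k:ℤ)) = p := by
        apply Prod.ext
        · simpa using hxv
        · simp only []
          split_ifs at hkv ⊢ <;> omega
      rw [hbp]
      exact hid p ⟨g1, g2, g3, g4⟩ hpc hpd 0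
  · -- steps
    intro j hj
    show Kng (g (base N (j / 4)) (j % 4)) (g (base N ((j + 1) / 4)) ((j + 1) % 4))
    by_cases hr : j % 4 = 3
    · have h4 : (j + 1) / 4 = j / 4 + 1 ∧ (j + 1) % 4 = 0 := by omega
      rw [h4.1, h4.2]
      have : j / 4 + 1 < 4 ^ N := by omega
      have hs := hstep (j / 4) this
      rw [hr]
      exact hs
    · have h4 : (j + 1) / 4 = j / 4 ∧ (j + 1) % 4 = j % 4 + 1 := by omega
      rw [h4.1, h4.2]
      exact hinner _ (base_mem N _ (by omega)) _

set_option maxHeartbeats 1000000 in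
lemma tourV (N : ℕ) (hN : 2 ≤ N) (a b : ℤ)
    (ha0 : 0 ≤ a) (ha1 : a ≤ 2 ^ N - 1) (hb0 : 0 ≤ b) (hb1 : b + 1 ≤ 2 ^ N - 1)
    (hA : (a, b) ≠ ((0:ℤ), (0:ℤ))) (hB : (a, b) ≠ ((2:ℤ) ^ N - 1, 0)) :
    ∃ (m : ℕ) (w : ℕ → ℤ × ℤ), w 0 = ((0:ℤ), (0:ℤ)) ∧ w m = ((2:ℤ) ^ N - 1, 0) ∧
      (∀ j ≤ m, InGrid N (w j)) ∧
      (∀ j ≤ m, w j ≠ (a, b) ∧ w j ≠ (a, b + 1)) ∧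
      (∀ p, InGrid N p → p ≠ (a, b) → p ≠ (a, b + 1) → ∃ j ≤ m, w j = p) ∧
      (∀ j < m, Kng (w j) (w (j + 1))) := by
  have hn4 : (4:ℤ) ≤ 2 ^ N := by
    calc (4:ℤ) = 2 ^ 2 := by norm_num
    _ ≤ 2 ^ N := pow_le_pow_right₀ (by norm_num) hN
  obtain ⟨T, hT⟩ : ∃ T : ℤ, (2:ℤ) ^ N = 2 * T := ⟨2 ^ (N - 1), by
    rw [← pow_succ']; congr 1; omega⟩
  have ha00 : ¬(a = 0 ∧ b = 0) := by
    intro ⟨h1, h2⟩; exact hA (by rw [h1, h2])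
  have han : ¬(a = 2 ^ N - 1 ∧ b = 0) := by
    intro ⟨h1, h2⟩; exact hB (by rw [h1, h2])
  obtain ⟨σ, hσpm, hσ0, hσ1, hσb0, hσbt⟩ :
      ∃ σ : ℤ, (σ = 1 ∨ σ = -1) ∧ 0 ≤ a + σ ∧ a + σ ≤ 2 ^ N - 1 ∧
        (b = 0 → ((a % 2 = 0 → σ = -1) ∧ (a % 2 = 1 → σ = 1))) ∧
        (b + 1 = 2 ^ N - 1 → ((a % 2 = 0 → σ = 1) ∧ (a % 2 = 1 → σ = -1))) := by
    refine ⟨if b = 0 then (if a % 2 = 0 then -1 else 1)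
      else if b + 1 = 2 ^ N - 1 then (if a % 2 = 0 then 1 else -1)
      else (if a ≤ 2 ^ N - 2 then 1 else -1), ?_, ?_, ?_, ?_, ?_⟩ <;>
      split_ifs <;> omega
  set n := (2:ℤ) ^ N with hn
  set c : ℤ × ℤ := (a, b) with hcdef
  set d : ℤ × ℤ := (a, b + 1) with hddef
  have hres := skeleton N (by omega) c d
    (by simp [hcdef, Prod.ext_iff]; omega)
    (by simp [hddef, Prod.ext_iff]; omega)
    (by simp [hcdef, Prod.ext_iff]; omega)
    (by simp [hddef, Prod.ext_iff]; omega)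
    (fun p _ => if p.1 = a ∧ (p.2 = b ∨ p.2 = b + 1) then (p.1 + σ, p.2) else p)
    ?_ ?_ ?_ ?_ ?_
  · obtain ⟨m, w, h1', h2', h3', h4', h5', h6'⟩ := hres
    refine ⟨m, w, h1', h2', h3', ?_, ?_, h6'⟩
    · intro j hj; exact h4' j hj
    · intro p hp hpc hpd; exact h5' p hp hpc hpd
  · -- hgrid
    rintro ⟨p1, p2⟩ hp k
    simp only [InGrid] at hp ⊢
    try dsimp only at hp ⊢
    split_ifs <;> (try dsimp only) <;> omega
  · -- hne
    rintro ⟨p1, p2⟩ hp k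
    simp only [InGrid] at hp
    try dsimp only at hp
    constructor
    · intro hEq
      rw [hcdef] at hEq
      revert hEq
      try dsimp only
      split_ifs with h
      · intro hEq; rw [Prod.mk.injEq] at hEq; omega
      · intro hEq; rw [Prod.mk.injEq] at hEq; exact h ⟨hEq.1, Or.inl hEq.2⟩
    · intro hEq
      rw [hddef] at hEq
      revert hEq
      try dsimp only
      split_ifs with h
      · intro hEq; rw [Prod.mk.injEq] at hEq; omega
      · intro hEq; rw [Prod.mk.injEq] at hEq; exact h ⟨hEq.1, Or.inr hEq.2⟩
  · -- hid
    rintro ⟨p1, p2⟩ hp hpc hpd k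
    simp only [hcdef, hddef] at hpc hpd
    try dsimp only
    split_ifs with h
    · exfalso
      try dsimp only at h
      rcases h.2 with h2 | h2
      · exact hpc (by simp only [Prod.mk.injEq]; exact ⟨h.1, h2⟩)
      · exact hpd (by simp only [Prod.mk.injEq]; exact ⟨h.1, h2⟩)
    · rfl
  · -- hinner
    rintro ⟨p1, p2⟩ hp k
    try dsimp only
    split_ifs <;> exact ⟨by simp, by simp⟩
  · -- hstep
    intro i hi
    have hcs := base_consec N i (by omega) hi
    have hm1 := base_mem N i (by omega)
    have hm2 := base_mem N (i + 1) (by omega)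
    simp only [InGrid] at hm1 hm2
    set u := base N i with hu
    set v := base N (i + 1) with hv
    clear_value u v
    obtain ⟨u1, u2⟩ := u
    obtain ⟨v1, v2⟩ := v
    try dsimp only at hm1 hm2 hcs ⊢
    split_ifs <;> simp only [Kng, abs_le] <;> (try dsimp only) <;> omega

set_option maxHeartbeats 2000000 in
lemma tourH (N : ℕ) (hN : 2 ≤ N) (a b : ℤ)
    (ha0 : 0 ≤ a) (ha1 : a + 1 ≤ 2 ^ N - 1) (hb0 : 0 ≤ b) (hb1 : b ≤ 2 ^ N - 1)
    (hA : (a, b) ≠ ((0:ℤ), (0:ℤ))) (hB : (a + 1, b) ≠ ((2:ℤ) ^ N - 1, 0)) :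
    ∃ (m : ℕ) (w : ℕ → ℤ × ℤ), w 0 = ((0:ℤ), (0:ℤ)) ∧ w m = ((2:ℤ) ^ N - 1, 0) ∧
      (∀ j ≤ m, InGrid N (w j)) ∧
      (∀ j ≤ m, w j ≠ (a, b) ∧ w j ≠ (a + 1, b)) ∧
      (∀ p, InGrid N p → p ≠ (a, b) → p ≠ (a + 1, b) → ∃ j ≤ m, w j = p) ∧
      (∀ j < m, Kng (w j) (w (j + 1))) := by
  have hn4 : (4:ℤ) ≤ 2 ^ N := by
    calc (4:ℤ) = 2 ^ 2 := by norm_num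
    _ ≤ 2 ^ N := pow_le_pow_right₀ (by norm_num) hN
  obtain ⟨T, hT⟩ : ∃ T : ℤ, (2:ℤ) ^ N = 2 * T := ⟨2 ^ (N - 1), by
    rw [← pow_succ']; congr 1; omega⟩
  have ha00 : ¬(a = 0 ∧ b = 0) := by
    intro ⟨h1, h2⟩; exact hA (by rw [h1, h2])
  have han : ¬(a + 1 = 2 ^ N - 1 ∧ b = 0) := by
    intro ⟨h1, h2⟩; exact hB (by rw [h1, h2])
  set n := (2:ℤ) ^ N with hn
  set c : ℤ × ℤ := (a, b) with hcdef
  set d : ℤ × ℤ := (a + 1, b) with hddef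
  have hres := skeleton N (by omega) c d
    (by simp only [ne_eq, hcdef, Prod.mk.injEq]; omega)
    (by simp only [ne_eq, hddef, Prod.mk.injEq]; omega)
    (by simp only [ne_eq, hcdef, Prod.mk.injEq]; omega)
    (by simp only [ne_eq, hddef, Prod.mk.injEq]; omega)
    (fun p k =>
      if p.1 = a ∧ p.2 = b then
        (if b = 0 then (a, 1) else if b = n - 1 then (a, n - 2)
         else if a = 0 then
           (if k = 0 then ((1:ℤ), b - 1) else if k = 1 then ((2:ℤ), b) else ((1:ℤ), b + 1))
         else (a - 1, b))
      else if p.1 = a + 1 ∧ p.2 = b then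
        (if b = 0 then (a + 1, 1) else if b = n - 1 then (a + 1, n - 2)
         else if a + 1 = n - 1 then
           (if k = 0 then (n - 2, b + 1) else if k = 1 then (n - 3, b) else (n - 2, b - 1))
         else (a + 2, b))
      else p)
    ?_ ?_ ?_ ?_ ?_
  · obtain ⟨m, w, h1', h2', h3', h4', h5', h6'⟩ := hres
    exact ⟨m, w, h1', h2', h3', h4', h5', h6'⟩
  · -- hgrid
    rintro ⟨p1, p2⟩ hp k
    simp only [InGrid] at hp ⊢
    try dsimp only at hp ⊢
    split_ifs <;> (try dsimp only) <;> omega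
  · -- hne
    rintro ⟨p1, p2⟩ hp k
    simp only [InGrid] at hp
    try dsimp only at hp
    constructor
    · intro hEq
      rw [hcdef] at hEq
      revert hEq
      try dsimp only
      split_ifs <;> (intro hEq; rw [Prod.mk.injEq] at hEq) <;> omega
    · intro hEq
      rw [hddef] at hEq
      revert hEq
      try dsimp only
      split_ifs <;> (intro hEq; rw [Prod.mk.injEq] at hEq) <;> omega
  · -- hid
    rintro ⟨p1, p2⟩ hp hpc hpd k
    simp only [hcdef, hddef] at hpc hpd
    rw [Ne, Prod.mk.injEq] at hpc hpd
    try dsimp only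
    by_cases h1 : p1 = a ∧ p2 = b
    · exact absurd h1 hpc
    by_cases h2 : p1 = a + 1 ∧ p2 = b
    · exact absurd h2 hpd
    rw [if_neg h1, if_neg h2]
  · -- hinner
    rintro ⟨p1, p2⟩ hp k
    try dsimp only
    split_ifs <;> simp only [Kng, abs_le] <;> (try dsimp only) <;>
      (first | contradiction | omega)
  · -- hstep
    intro i hi
    have hcs := base_consec N i (by omega) hi
    have hm1 := base_mem N i (by omega)
    have hm2 := base_mem N (i + 1) (by omega)
    simp only [InGrid] at hm1 hm2
    set u := base N i with hu
    set v := base N (i + 1) with hv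
    clear_value u v
    obtain ⟨u1, u2⟩ := u
    obtain ⟨v1, v2⟩ := v
    try dsimp only at hm1 hm2 hcs ⊢
    split_ifs <;> simp only [Kng, abs_le] <;> (try dsimp only) <;>
      (first | contradiction | omega)

set_option maxHeartbeats 1000000 in
theorem hilbert_evade_two_blocked_corners (N n1 n2 : ℕ) (hN : 2 ≤ N)
    (h1 : 1 ≤ n1) (hn2 : n2 = n1 + 3) (h2 : n2 ≤ 4 ^ N - 2) (hmod : n1 % 4 = 0) :
    ∃ (m : ℕ) (w : ℕ → ℤ × ℤ), IsEvasionTour N {n1, n2} m w := by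
  have hf16 : 16 ≤ 4 ^ N := by
    calc (16:ℕ) = 4 ^ 2 := by norm_num
    _ ≤ 4 ^ N := Nat.pow_le_pow_right (by norm_num) hN
  have hk' : n1 = 4 * (n1 / 4) := by omega
  have hlt : 4 * (n1 / 4) + 3 < 4 ^ N := by omega
  set c := hilbert N n1 with hcc
  set d := hilbert N n2 with hdd
  have hadj : Adj c d := by
    rw [hcc, hdd]
    have := hilbert_pair N (by omega) (n1 / 4) hlt
    rw [← hk'] at this
    rw [hn2]
    exact this
  have hcg := hilbert_grid N n1
  have hdg := hilbert_grid N n2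
  rw [← hcc] at hcg
  rw [← hdd] at hdg
  obtain ⟨gc1, gc2, gc3, gc4⟩ := hcg
  obtain ⟨gd1, gd2, gd3, gd4⟩ := hdg
  have hc0 : c ≠ ((0:ℤ), (0:ℤ)) := by
    intro h
    have := hilbert_eq_start N (by omega) n1 (by omega) (by rw [← hcc]; exact h)
    omega
  have hd0 : d ≠ ((0:ℤ), (0:ℤ)) := by
    intro h
    have := hilbert_eq_start N (by omega) n2 (by omega) (by rw [← hdd]; exact h)
    omega
  have hc1 : c ≠ ((2:ℤ) ^ N - 1, 0) := by
    intro h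
    have := hilbert_eq_last N (by omega) n1 (by omega) (by rw [← hcc]; exact h)
    omega
  have hd1 : d ≠ ((2:ℤ) ^ N - 1, 0) := by
    intro h
    have := hilbert_eq_last N (by omega) n2 (by omega) (by rw [← hdd]; exact h)
    omega
  have key : ∃ (m : ℕ) (w : ℕ → ℤ × ℤ), w 0 = ((0:ℤ), (0:ℤ)) ∧
      w m = ((2:ℤ) ^ N - 1, 0) ∧ (∀ j ≤ m, InGrid N (w j)) ∧
      (∀ j ≤ m, w j ≠ c ∧ w j ≠ d) ∧
      (∀ p, InGrid N p → p ≠ c → p ≠ d → ∃ j ≤ m, w j = p) ∧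
      (∀ j < m, Kng (w j) (w (j + 1))) := by
    rcases hadj with ⟨e1, e2 | e2⟩ | ⟨e1, e2 | e2⟩
    · -- c.2 = d.2 + 1 : blocked (d.1, d.2), (d.1, d.2 + 1) = (d, c)
      have q1 : ((d.1 : ℤ), (d.2 : ℤ)) = d := Prod.mk.eta
      have q2 : ((d.1 : ℤ), d.2 + 1) = c := Prod.ext (by omega) (by omega)
      obtain ⟨m, w, H1, H2, H3, H4, H5, H6⟩ := tourV N hN d.1 d.2 gd1 gd2
        (by omega) (by omega) (by rw [q1]; exact hd0) (by rw [q1]; exact hd1)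
      rw [q1, q2] at H4 H5
      exact ⟨m, w, H1, H2, H3, fun j hj => ⟨(H4 j hj).2, (H4 j hj).1⟩,
        fun p hp hpc hpd => H5 p hp hpd hpc, H6⟩
    · -- d.2 = c.2 + 1 : blocked (c, d)
      have q1 : ((c.1 : ℤ), (c.2 : ℤ)) = c := Prod.mk.eta
      have q2 : ((c.1 : ℤ), c.2 + 1) = d := Prod.ext (by omega) (by omega)
      obtain ⟨m, w, H1, H2, H3, H4, H5, H6⟩ := tourV N hN c.1 c.2 gc1 gc2
        (by omega) (by omega) (by rw [q1]; exact hc0) (by rw [q1]; exact hc1)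
      rw [q1, q2] at H4 H5
      exact ⟨m, w, H1, H2, H3, H4, H5, H6⟩
    · -- c.1 = d.1 + 1 : blocked (d, c) horizontally
      have q1 : ((d.1 : ℤ), (d.2 : ℤ)) = d := Prod.mk.eta
      have q2 : ((d.1 : ℤ) + 1, (d.2 : ℤ)) = c := Prod.ext (by omega) (by omega)
      obtain ⟨m, w, H1, H2, H3, H4, H5, H6⟩ := tourH N hN d.1 d.2
        gd1 (by omega) gd3 gd4 (by rw [q1]; exact hd0) (by rw [q2]; exact hc1)
      rw [q1, q2] at H4 H5
      exact ⟨m, w, H1, H2, H3, fun j hj => ⟨(H4 j hj).2, (H4 j hj).1⟩,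
        fun p hp hpc hpd => H5 p hp hpd hpc, H6⟩
    · -- d.1 = c.1 + 1 : blocked (c, d) horizontally
      have q1 : ((c.1 : ℤ), (c.2 : ℤ)) = c := Prod.mk.eta
      have q2 : ((c.1 : ℤ) + 1, (c.2 : ℤ)) = d := Prod.ext (by omega) (by omega)
      obtain ⟨m, w, H1, H2, H3, H4, H5, H6⟩ := tourH N hN c.1 c.2
        gc1 (by omega) gc3 gc4 (by rw [q1]; exact hc0) (by rw [q2]; exact hd1)
      rw [q1, q2] at H4 H5
      exact ⟨m, w, H1, H2, H3, H4, H5, H6⟩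
  obtain ⟨m, w, H1, H2, H3, H4, H5, H6⟩ := key
  refine ⟨m, w, ?_, ?_, H3, ?_, ?_, ?_⟩

  · rw [hilbert_zero N]; exact H1
  · rw [hilbert_last N (by omega)]; exact H2
  · intro j hj b hb
    rcases Finset.mem_insert.mp hb with hb | hb
    · subst hb; rw [← hcc]; exact (H4 j hj).1
    · rw [Finset.mem_singleton] at hb; subst hb; rw [← hdd]; exact (H4 j hj).2
  · intro p hp hfa
    refine H5 p hp ?_ ?_
    · rw [hcc]; exact hfa n1 (Finset.mem_insert_self _ _)
    · rw [hdd]; exact hfa n2 (Finset.mem_insert_of_mem (Finset.mem_singleton_self _))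
  · intro j hj b hb
    have hk := H6 j hj
    have hu := H4 j (le_of_lt hj)
    have hv := H4 (j + 1) (by omega)
    rcases Finset.mem_insert.mp hb with hb | hb
    · subst hb; rw [← hcc]; exact king_seg _ _ _ hk.1 hk.2 hu.1 hv.1
    · rw [Finset.mem_singleton] at hb; subst hb; rw [← hdd]
      exact king_seg _ _ _ hk.1 hk.2 hu.2 hv.2
end

section
/- Main theorem (a Hilbert curve with a hole of at most two blocked nodes can be covered): for every N ≥ 1 and every set B of blocked nodes with |B| ≤ 2 and 0 ∉ B and 4^N−1 ∉ B (the entry and exit nodes are available), an evasion tour exists; i.e., there is a finite sequence of waypoints starting at node h_N(0), ending at node h_N(4^N−1), visiting every node of the grid {0,...,2^N−1} × {0,...,2^N−1} except those in h_N(B), never visiting a blocked node, and such that no straight-line segment between consecutive waypoints passes through the interior of a blocked cell. -/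
namespace Evade

lemma aux_half (a b c : ℤ) (hab : |a - b| ≤ 1) (hac : a ≠ c) (t : ℝ) (ht0 : 0 ≤ t)
    (h : |(1 - t) * (a : ℝ) + t * (b : ℝ) - (c : ℝ)| < 1 / 2) : 1 / 2 < t := by
  have h1 : (1 : ℝ) ≤ |(a : ℝ) - c| := by
    have : (1 : ℤ) ≤ |a - c| := Int.one_le_abs (sub_ne_zero.mpr hac)
    calc (1:ℝ) = ((1:ℤ):ℝ) := by norm_num
    _ ≤ ((|a - c| : ℤ) : ℝ) := by exact_mod_cast this
    _ = |(a:ℝ) - c| := by push_cast; ring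
  have hab' : |(a : ℝ) - b| ≤ 1 := by
    have : ((|a - b| : ℤ) : ℝ) ≤ 1 := by exact_mod_cast hab
    rw [Int.cast_abs] at this
    push_cast at this
    exact this
  have h2 : |(a : ℝ) - ((1 - t) * a + t * b)| ≤ t := by
    rw [show (a : ℝ) - ((1 - t) * a + t * b) = t * ((a : ℝ) - b) by ring, abs_mul,
      abs_of_nonneg ht0]
    exact mul_le_of_le_one_right ht0 hab'
  have tri := abs_sub_le ((a : ℝ)) ((1 - t) * a + t * b) (c : ℝ)
  linarith

def King (a b : ℤ × ℤ) : Prop :=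
  a.1 - b.1 ≤ 1 ∧ b.1 - a.1 ≤ 1 ∧ a.2 - b.2 ≤ 1 ∧ b.2 - a.2 ≤ 1

lemma king_refl (a : ℤ × ℤ) : King a a := by simp [King]

lemma king_symm {a b : ℤ × ℤ} (h : King a b) : King b a := by
  obtain ⟨h1, h2, h3, h4⟩ := h; exact ⟨h2, h1, h4, h3⟩

lemma seg_king {u v c : ℤ × ℤ} (hk : King u v) (hu : c ≠ u) (hv : c ≠ v) :
    SegAvoidsCell u v c := by
  rintro t ⟨ht0, ht1⟩ ⟨h1, h2⟩
  obtain ⟨k1, k2, k3, k4⟩ := hk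
  have hx : |u.1 - v.1| ≤ 1 := abs_le.mpr ⟨by omega, by omega⟩
  have hy : |u.2 - v.2| ≤ 1 := abs_le.mpr ⟨by omega, by omega⟩
  have hx' : |v.1 - u.1| ≤ 1 := abs_le.mpr ⟨by omega, by omega⟩
  have hy' : |v.2 - u.2| ≤ 1 := abs_le.mpr ⟨by omega, by omega⟩
  have hvside : 1 / 2 < 1 - t := by
    rcases (show v.1 ≠ c.1 ∨ v.2 ≠ c.2 by
      by_contra hcon; push_neg at hcon; exact hv (Prod.ext hcon.1.symm hcon.2.symm)) with h | h
    · exact aux_half v.1 u.1 c.1 hx' h (1 - t) (by linarith)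
        (by rw [show (1 - (1 - t)) * (v.1:ℝ) + (1-t) * (u.1:ℝ) - (c.1:ℝ)
              = (1 - t) * (u.1 : ℝ) + t * (v.1 : ℝ) - (c.1 : ℝ) by ring]; exact h1)
    · exact aux_half v.2 u.2 c.2 hy' h (1 - t) (by linarith)
        (by rw [show (1 - (1 - t)) * (v.2:ℝ) + (1-t) * (u.2:ℝ) - (c.2:ℝ)
              = (1 - t) * (u.2 : ℝ) + t * (v.2 : ℝ) - (c.2 : ℝ) by ring]; exact h2)
  have huside : 1 / 2 < t := by
    rcases (show u.1 ≠ c.1 ∨ u.2 ≠ c.2 by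
      by_contra hcon; push_neg at hcon; exact hu (Prod.ext hcon.1.symm hcon.2.symm)) with h | h
    · exact aux_half u.1 v.1 c.1 hx h t ht0 h1
    · exact aux_half u.2 v.2 c.2 hy h t ht0 h2
  linarith

section Graph

variable (N : ℕ) (S : Finset (ℤ × ℤ))

def Good (p : ℤ × ℤ) : Prop := InGrid N p ∧ p ∉ S

def Step (a b : ℤ × ℤ) : Prop := King a b ∧ Good N S b

def Reach : ℤ × ℤ → ℤ × ℤ → Prop := Relation.ReflTransGen (Step N S)

variable {N S}

lemma reach_good {a b : ℤ × ℤ} (ha : Good N S a) (h : Reach N S a b) : Good N S b := by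
  induction h with
  | refl => exact ha
  | tail _ hstep ih => exact hstep.2

lemma reach_symm {a b : ℤ × ℤ} (ha : Good N S a) (h : Reach N S a b) : Reach N S b a := by
  induction h with
  | refl => exact .refl
  | @tail b c hab hstep ih =>
      exact Relation.ReflTransGen.head ⟨king_symm hstep.1, reach_good ha hab⟩ ih

end Graph

lemma exists_three {S : Finset (ℤ × ℤ)} (hS : S.card ≤ 2) {a b c : ℤ × ℤ}
    (hab : a ≠ b) (hac : a ≠ c) (hbc : b ≠ c) : a ∉ S ∨ b ∉ S ∨ c ∉ S := by
  by_contra h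
  push_neg at h
  obtain ⟨ha, hb, hc⟩ := h
  have hsub : ({a, b, c} : Finset (ℤ × ℤ)) ⊆ S := by
    intro x hx
    simp only [Finset.mem_insert, Finset.mem_singleton] at hx
    rcases hx with rfl | rfl | rfl <;> assumption
  have h3 : ({a, b, c} : Finset (ℤ × ℤ)).card = 3 := by
    rw [Finset.card_insert_of_notMem (by simp [hab, hac]),
      Finset.card_insert_of_notMem (by simp [hbc]), Finset.card_singleton]
  have := Finset.card_le_card hsub
  omega

lemma mem_two {S : Finset (ℤ × ℤ)} (hS : S.card ≤ 2) {a b : ℤ × ℤ} (ha : a ∈ S) (hb : b ∈ S)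
    (hab : a ≠ b) {c : ℤ × ℤ} (h1 : c ≠ a) (h2 : c ≠ b) : c ∉ S := by
  intro hc
  rcases exists_three hS hab (Ne.symm h1) (Ne.symm h2) with h | h | h <;> exact h (by assumption)

lemma pair_ne {x1 y1 x2 y2 : ℤ} (h : x1 ≠ x2 ∨ y1 ≠ y2) : ((x1, y1) : ℤ × ℤ) ≠ (x2, y2) := by
  intro hc
  rw [Prod.mk.injEq] at hc
  tauto

lemma king_mk {x1 y1 x2 y2 : ℤ} (h1 : x1 - x2 ≤ 1) (h2 : x2 - x1 ≤ 1) (h3 : y1 - y2 ≤ 1)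
    (h4 : y2 - y1 ≤ 1) : King (x1, y1) (x2, y2) := ⟨h1, h2, h3, h4⟩

lemma good_mk {N : ℕ} {S : Finset (ℤ × ℤ)} {x y : ℤ} (h1 : 0 ≤ x) (h2 : x ≤ 2 ^ N - 1)
    (h3 : 0 ≤ y) (h4 : y ≤ 2 ^ N - 1) (h5 : (x, y) ∉ S) : Good N S (x, y) :=
  ⟨⟨h1, h2, h3, h4⟩, h5⟩

lemma descent {N : ℕ} {S : Finset (ℤ × ℤ)} (hS : S.card ≤ 2) (h00 : ((0 : ℤ), (0 : ℤ)) ∉ S)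
    {p : ℤ × ℤ} (hp : Good N S p) (hne : p ≠ (0, 0)) :
    ∃ q : ℤ × ℤ, Good N S q ∧ q.1 + q.2 < p.1 + p.2 ∧ Reach N S p q := by
  obtain ⟨x, y⟩ := p
  obtain ⟨⟨hx0, hx1, hy0, hy1⟩, hpS⟩ := hp
  simp only at hx0 hx1 hy0 hy1
  have hne' : ¬(x = 0 ∧ y = 0) := by
    intro hc; exact hne (by rw [hc.1, hc.2])
  by_cases hx : 0 < x
  · by_cases hy : 0 < y
    · -- interior-ish case: three decreasing candidates
      rcases exists_three hS (a := (x - 1, y)) (b := (x, y - 1)) (c := (x - 1, y - 1))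
        (pair_ne (by omega)) (pair_ne (by omega)) (pair_ne (by omega)) with h | h | h
      · exact ⟨(x - 1, y), good_mk (by omega) (by linarith) hy0 hy1 h, by dsimp only; omega,
          Relation.ReflTransGen.single ⟨king_mk (by omega) (by omega) (by omega) (by omega),
            good_mk (by omega) (by linarith) hy0 hy1 h⟩⟩
      · exact ⟨(x, y - 1), good_mk hx0 hx1 (by omega) (by linarith) h, by dsimp only; omega,
          Relation.ReflTransGen.single ⟨king_mk (by omega) (by omega) (by omega) (by omega),
            good_mk hx0 hx1 (by omega) (by linarith) h⟩⟩
      · exact ⟨(x - 1, y - 1), good_mk (by omega) (by linarith) (by omega) (by linarith) h,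
          by dsimp only; omega,
          Relation.ReflTransGen.single ⟨king_mk (by omega) (by omega) (by omega) (by omega),
            good_mk (by omega) (by linarith) (by omega) (by linarith) h⟩⟩
    · -- y = 0, x > 0
      have hy' : y = 0 := by omega
      subst hy'
      by_cases hA : ((x - 1, (0 : ℤ)) : ℤ × ℤ) ∈ S
      · have hx2 : 2 ≤ x := by
          rcases (by omega : x = 1 ∨ 2 ≤ x) with h | h
          · exfalso; rw [h] at hA; norm_num at hA; exact h00 hA
          · exact h
        have hn3 : (3 : ℤ) ≤ 2 ^ N := by linarith
        by_cases hB : ((x - 1, (1 : ℤ)) : ℤ × ℤ) ∈ S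
        · -- S = {(x-1,0),(x-1,1)}: go around via (x,1),(x-1,2),(x-2,1)
          have habne : ((x - 1, (0:ℤ)) : ℤ × ℤ) ≠ (x - 1, 1) := pair_ne (by omega)
          have g1 : Good N S (x, 1) := good_mk hx0 hx1 (by omega) (by linarith)
            (mem_two hS hA hB habne (pair_ne (by omega)) (pair_ne (by omega)))
          have g2 : Good N S (x - 1, 2) := good_mk (by omega) (by linarith) (by omega)
            (by linarith) (mem_two hS hA hB habne (pair_ne (by omega)) (pair_ne (by omega)))
          have g3 : Good N S (x - 2, 1) := good_mk (by omega) (by linarith) (by omega)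
            (by linarith) (mem_two hS hA hB habne (pair_ne (by omega)) (pair_ne (by omega)))
          refine ⟨(x - 2, 1), g3, by dsimp only; omega, ?_⟩
          refine Relation.ReflTransGen.head ⟨king_mk (by omega) (by omega) (by omega) (by omega), g1⟩ ?_
          refine Relation.ReflTransGen.head ⟨king_mk (by omega) (by omega) (by omega) (by omega), g2⟩ ?_
          exact Relation.ReflTransGen.single ⟨king_mk (by omega) (by omega) (by omega) (by omega), g3⟩
        · -- (x-1,1) free; from there one of (x-2,1),(x-2,0) is free
          have g1 : Good N S (x - 1, 1) := good_mk (by omega) (by linarith) (by omega)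
            (by linarith) hB
          by_cases hC : ((x - 2, (1 : ℤ)) : ℤ × ℤ) ∈ S
          · have g2 : Good N S (x - 2, 0) := good_mk (by omega) (by linarith) (by omega)
              (by linarith) (mem_two hS hA hC (pair_ne (by omega)) (pair_ne (by omega))
                (pair_ne (by omega)))
            refine ⟨(x - 2, 0), g2, by dsimp only; omega, ?_⟩
            refine Relation.ReflTransGen.head ⟨king_mk (by omega) (by omega) (by omega) (by omega), g1⟩ ?_
            exact Relation.ReflTransGen.single ⟨king_mk (by omega) (by omega) (by omega) (by omega), g2⟩
          · have g2 : Good N S (x - 2, 1) := good_mk (by omega) (by linarith) (by omega)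
              (by linarith) hC
            refine ⟨(x - 2, 1), g2, by dsimp only; omega, ?_⟩
            refine Relation.ReflTransGen.head ⟨king_mk (by omega) (by omega) (by omega) (by omega), g1⟩ ?_
            exact Relation.ReflTransGen.single ⟨king_mk (by omega) (by omega) (by omega) (by omega), g2⟩
      · exact ⟨(x - 1, 0), good_mk (by omega) (by linarith) (by omega) (by linarith) hA,
          by dsimp only; omega,
          Relation.ReflTransGen.single ⟨king_mk (by omega) (by omega) (by omega) (by omega),
            good_mk (by omega) (by linarith) (by omega) (by linarith) hA⟩⟩
  · -- x = 0, y > 0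
    have hx' : x = 0 := by omega
    subst hx'
    have hy : 0 < y := by omega
    by_cases hA : (((0 : ℤ), y - 1) : ℤ × ℤ) ∈ S
    · have hy2 : 2 ≤ y := by
        rcases (by omega : y = 1 ∨ 2 ≤ y) with h | h
        · exfalso; rw [h] at hA; norm_num at hA; exact h00 hA
        · exact h
      have hn3 : (3 : ℤ) ≤ 2 ^ N := by linarith
      by_cases hB : (((1 : ℤ), y - 1) : ℤ × ℤ) ∈ S
      · -- S = {(0,y-1),(1,y-1)}: go (0,y) → (1,y) → (2,y-1) → (1,y-2)
        have habne : (((0:ℤ), y - 1) : ℤ × ℤ) ≠ (1, y - 1) := pair_ne (by omega)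
        have g1 : Good N S (1, y) := good_mk (by omega) (by linarith) hy0 hy1
          (mem_two hS hA hB habne (pair_ne (by omega)) (pair_ne (by omega)))
        have g2 : Good N S (2, y - 1) := good_mk (by omega) (by linarith) (by omega)
          (by linarith) (mem_two hS hA hB habne (pair_ne (by omega)) (pair_ne (by omega)))
        have g3 : Good N S (1, y - 2) := good_mk (by omega) (by linarith) (by omega)
          (by linarith) (mem_two hS hA hB habne (pair_ne (by omega)) (pair_ne (by omega)))
        refine ⟨(1, y - 2), g3, by dsimp only; omega, ?_⟩
        refine Relation.ReflTransGen.head ⟨king_mk (by omega) (by omega) (by omega) (by omega), g1⟩ ?_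
        refine Relation.ReflTransGen.head ⟨king_mk (by omega) (by omega) (by omega) (by omega), g2⟩ ?_
        exact Relation.ReflTransGen.single ⟨king_mk (by omega) (by omega) (by omega) (by omega), g3⟩
      · have g1 : Good N S (1, y - 1) := good_mk (by omega) (by linarith) (by omega)
          (by linarith) hB
        by_cases hC : (((1 : ℤ), y - 2) : ℤ × ℤ) ∈ S
        · have g2 : Good N S (0, y - 2) := good_mk (by omega) (by linarith) (by omega)
            (by linarith) (mem_two hS hA hC (pair_ne (by omega)) (pair_ne (by omega))
              (pair_ne (by omega)))
          refine ⟨(0, y - 2), g2, by dsimp only; omega, ?_⟩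
          refine Relation.ReflTransGen.head ⟨king_mk (by omega) (by omega) (by omega) (by omega), g1⟩ ?_
          exact Relation.ReflTransGen.single ⟨king_mk (by omega) (by omega) (by omega) (by omega), g2⟩
        · have g2 : Good N S (1, y - 2) := good_mk (by omega) (by linarith) (by omega)
            (by linarith) hC
          refine ⟨(1, y - 2), g2, by dsimp only; omega, ?_⟩
          refine Relation.ReflTransGen.head ⟨king_mk (by omega) (by omega) (by omega) (by omega), g1⟩ ?_
          exact Relation.ReflTransGen.single ⟨king_mk (by omega) (by omega) (by omega) (by omega), g2⟩
    · exact ⟨(0, y - 1), good_mk (by omega) (by linarith) (by omega) (by linarith) hA,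
        by dsimp only; omega,
        Relation.ReflTransGen.single ⟨king_mk (by omega) (by omega) (by omega) (by omega),
          good_mk (by omega) (by linarith) (by omega) (by linarith) hA⟩⟩

lemma reach_zero_aux {N : ℕ} {S : Finset (ℤ × ℤ)} (hS : S.card ≤ 2)
    (h00 : ((0 : ℤ), (0 : ℤ)) ∉ S) :
    ∀ k : ℕ, ∀ p : ℤ × ℤ, Good N S p → (p.1 + p.2).toNat ≤ k → Reach N S p (0, 0) := by
  intro k
  induction k with
  | zero =>
      intro p hp hk
      have h1 : 0 ≤ p.1 := hp.1.1
      have h2 : 0 ≤ p.2 := hp.1.2.2.1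
      have : p = (0, 0) := by
        have : p.1 + p.2 ≤ 0 := by omega
        exact Prod.ext (by omega) (by omega)
      rw [this]
      exact Relation.ReflTransGen.refl
  | succ k ih =>
      intro p hp hk
      by_cases hne : p = (0, 0)
      · rw [hne]
        exact Relation.ReflTransGen.refl
      · obtain ⟨q, hq, hlt, hpq⟩ := descent hS h00 hp hne
        have h1 : 0 ≤ q.1 := hq.1.1
        have h2 : 0 ≤ q.2 := hq.1.2.2.1
        exact hpq.trans (ih q hq (by omega))

lemma reach_of_good {N : ℕ} {S : Finset (ℤ × ℤ)} (hS : S.card ≤ 2)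
    (h00 : ((0 : ℤ), (0 : ℤ)) ∉ S) {u v : ℤ × ℤ} (hu : Good N S u) (hv : Good N S v) :
    Reach N S u v := by
  have r1 : Reach N S u (0, 0) := reach_zero_aux hS h00 _ u hu le_rfl
  have r2 : Reach N S v (0, 0) := reach_zero_aux hS h00 _ v hv le_rfl
  exact r1.trans (reach_symm hv r2)

def GW (N : ℕ) (S : Finset (ℤ × ℤ)) (u v : ℤ × ℤ) (l : List (ℤ × ℤ)) : Prop :=
  l.head? = some u ∧ l.getLast? = some v ∧ (∀ p ∈ l, Good N S p) ∧ l.Chain' King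

lemma gw_append {N : ℕ} {S : Finset (ℤ × ℤ)} {u v w : ℤ × ℤ} {l₁ l₂ : List (ℤ × ℤ)}
    (h1 : GW N S u v l₁) (h2 : GW N S v w l₂) : GW N S u w (l₁ ++ l₂) := by
  obtain ⟨hh1, hl1, hg1, hc1⟩ := h1
  obtain ⟨hh2, hl2, hg2, hc2⟩ := h2
  have hne1 : l₁ ≠ [] := by rintro rfl; simp at hh1
  have hne2 : l₂ ≠ [] := by rintro rfl; simp at hh2
  refine ⟨?_, ?_, ?_, ?_⟩
  · rw [List.head?_append_of_ne_nil _ hne1]; exact hh1  -- name may differ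
  · rw [List.getLast?_append_of_ne_nil _ hne2]; exact hl2
  · intro p hp
    rcases List.mem_append.mp hp with h | h
    · exact hg1 p h
    · exact hg2 p h
  · refine List.IsChain.append hc1 hc2 ?_
    intro x hx y hy
    rw [hl1] at hx
    rw [hh2] at hy
    cases hx; cases hy
    exact king_refl v

lemma reach_gw {N : ℕ} {S : Finset (ℤ × ℤ)} {u v : ℤ × ℤ} (hu : Good N S u)
    (h : Reach N S u v) : ∃ l, GW N S u v l := by
  induction h with
  | refl => exact ⟨[u], ⟨by simp, by simp, by simpa using hu, List.isChain_singleton _⟩⟩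
  | @tail b c hab hstep ih =>
      obtain ⟨l, hh, hl, hg, hc⟩ := ih
      have hne : l ≠ [] := by rintro rfl; simp at hh
      refine ⟨l ++ [c], ?_, ?_, ?_, ?_⟩
      · rw [List.head?_append_of_ne_nil _ hne]; exact hh
      · simp
      · intro p hp
        rcases List.mem_append.mp hp with h | h
        · exact hg p h
        · simp at h; rw [h]; exact hstep.2
      · refine List.IsChain.append hc (by simp) ?_
        intro x hx y hy
        rw [hl] at hx
        simp at hy
        cases hx
        rw [← hy]
        exact hstep.1

lemma walk_through {N : ℕ} {S : Finset (ℤ × ℤ)} (hS : S.card ≤ 2)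
    (h00 : ((0 : ℤ), (0 : ℤ)) ∉ S) :
    ∀ qs : List (ℤ × ℤ), (∀ q ∈ qs, Good N S q) → ∀ u, Good N S u →
      ∃ v l, Good N S v ∧ GW N S u v l ∧ ∀ q ∈ qs, q ∈ l := by
  intro qs
  induction qs with
  | nil =>
      intro _ u hu
      exact ⟨u, [u], hu, ⟨by simp, by simp, by simpa using hu, List.isChain_singleton _⟩, by simp⟩
  | cons q rest ih =>
      intro hqs u hu
      have hq : Good N S q := hqs q (by simp)
      obtain ⟨l₁, hl₁⟩ := reach_gw hu (reach_of_good hS h00 hu hq)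
      obtain ⟨v, l₂, hv, hl₂, hcov⟩ := ih (fun r hr => hqs r (by simp [hr])) q hq
      refine ⟨v, l₁ ++ l₂, hv, gw_append hl₁ hl₂, ?_⟩
      intro r hr
      rcases List.mem_cons.mp hr with rfl | hr'
      · exact List.mem_append.mpr (Or.inl (List.mem_of_mem_getLast? hl₁.2.1))  -- name?
      · exact List.mem_append.mpr (Or.inr (hcov r hr'))



lemma hilbert_zero : ∀ N, hilbert N 0 = (0, 0)
  | 0 => rfl
  | 1 => rfl
  | (N + 2) => by
      have ih := hilbert_zero (N + 1)
      simp only [hilbert]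
      simp [Nat.zero_div, Nat.zero_mod, ih]

lemma hilbert_mem : ∀ N, ∀ i < 4 ^ N, InGrid N (hilbert N i)
  | 0, i, h => by
      interval_cases i
      simp [hilbert, InGrid]
  | 1, i, h => by
      interval_cases i <;> simp [hilbert, InGrid] <;> norm_num
  | (N + 2), i, h => by
      have hk : 0 < 4 ^ (N + 1) := Nat.pow_pos (by norm_num)
      have ih := hilbert_mem (N + 1) (i % 4 ^ (N + 1)) (Nat.mod_lt _ hk)
      obtain ⟨h1, h2, h3, h4⟩ := ih
      have hs : (1 : ℤ) ≤ 2 ^ (N + 1) := one_le_pow₀ (by norm_num)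
      have hpow : (2 : ℤ) ^ (N + 2) = 2 * 2 ^ (N + 1) := by ring
      simp only [hilbert]
      split_ifs <;>
        refine ⟨?_, ?_, ?_, ?_⟩ <;> simp only [] <;> (try rw [hpow]) <;> linarith

lemma div_eq_three {k : ℕ} (hk : 0 < k) : (4 * k - 1) / k = 3 := by
  have h1 : 3 * k ≤ 4 * k - 1 := by omega
  have h2 : 4 * k - 1 < 4 * k := by omega
  exact Nat.div_eq_of_lt_le (by omega) (by omega)

lemma hilbert_last : ∀ N, 1 ≤ N → hilbert N (4 ^ N - 1) = (2 ^ N - 1, 0)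
  | 1, _ => by norm_num [hilbert]
  | (N + 2), _ => by
      have ih := hilbert_last (N + 1) (by omega)
      have hk : 0 < 4 ^ (N + 1) := Nat.pow_pos (by norm_num)
      have h4 : (4 : ℕ) ^ (N + 2) = 4 * 4 ^ (N + 1) := by ring
      have hq : (4 ^ (N + 2) - 1) / 4 ^ (N + 1) = 3 := by
        rw [h4]; exact div_eq_three hk
      have hr : (4 ^ (N + 2) - 1) % 4 ^ (N + 1) = 4 ^ (N + 1) - 1 := by
        have hd := Nat.div_add_mod (4 ^ (N + 2) - 1) (4 ^ (N + 1))
        rw [hq] at hd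
        have := Nat.mod_lt (4 ^ (N + 2) - 1) hk
        omega
      have hpow : (2 : ℤ) ^ (N + 2) = 2 * 2 ^ (N + 1) := by ring
      simp only [hilbert, hq, hr, ih]
      norm_num [hpow]

lemma hilbert_eq_zero : ∀ N, 1 ≤ N → ∀ i < 4 ^ N, hilbert N i = (0, 0) → i = 0
  | 1, _, i, hi, h => by
      interval_cases i <;> simp_all [hilbert]
  | (N + 2), _, i, hi, h => by
      have hk : 0 < 4 ^ (N + 1) := Nat.pow_pos (by norm_num)
      have hmem := hilbert_mem (N + 1) (i % 4 ^ (N + 1)) (Nat.mod_lt _ hk)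
      obtain ⟨h1, h2, h3, h4⟩ := hmem
      have hs : (1 : ℤ) ≤ 2 ^ (N + 1) := one_le_pow₀ (by norm_num)
      have hd := Nat.div_add_mod i (4 ^ (N + 1))
      simp only [hilbert] at h
      split_ifs at h with e1 e2 e3 <;> rw [Prod.mk.injEq] at h
      · have hr := hilbert_eq_zero (N + 1) (by omega) (i % 4 ^ (N + 1)) (Nat.mod_lt _ hk)
          (Prod.ext h.2 h.1)
        rw [e1] at hd
        simp at hd
        omega
      · exfalso; have := h.2; omega
      · exfalso; have := h.2; omega
      · exfalso; have := h.1; omega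

lemma hilbert_eq_last : ∀ N, 1 ≤ N → ∀ i < 4 ^ N, hilbert N i = (2 ^ N - 1, 0) → i = 4 ^ N - 1
  | 1, _, i, hi, h => by
      interval_cases i <;> revert h <;> norm_num [hilbert, Prod.ext_iff]
  | (N + 2), _, i, hi, h => by
      have hk : 0 < 4 ^ (N + 1) := Nat.pow_pos (by norm_num)
      have hmem := hilbert_mem (N + 1) (i % 4 ^ (N + 1)) (Nat.mod_lt _ hk)
      obtain ⟨h1, h2, h3, h4⟩ := hmem
      have hs : (1 : ℤ) ≤ 2 ^ (N + 1) := one_le_pow₀ (by norm_num)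
      have hpow : (2 : ℤ) ^ (N + 2) = 2 * 2 ^ (N + 1) := by ring
      have h4n : (4 : ℕ) ^ (N + 2) = 4 * 4 ^ (N + 1) := by ring
      have hd := Nat.div_add_mod i (4 ^ (N + 1))
      have hq4 : i / 4 ^ (N + 1) < 4 := by
        apply Nat.div_lt_of_lt_mul; omega
      simp only [hilbert] at h
      rw [hpow] at h
      split_ifs at h with e1 e2 e3 <;> rw [Prod.mk.injEq] at h
      · exfalso; have := h.1; omega
      · exfalso; have := h.2; omega
      · exfalso; have := h.2; omega
      · have e4 : i / 4 ^ (N + 1) = 3 :=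
          (by omega : ∀ m : ℕ, m < 4 → m ≠ 0 → m ≠ 1 → m ≠ 2 → m = 3) _ hq4 e1 e2 e3
        have hp : hilbert (N + 1) (i % 4 ^ (N + 1)) = (2 ^ (N + 1) - 1, 0) := by
          have c1 : (hilbert (N + 1) (i % 4 ^ (N + 1))).1 = 2 ^ (N + 1) - 1 := by
            have := h.2; omega
          have c2 : (hilbert (N + 1) (i % 4 ^ (N + 1))).2 = 0 := by
            have := h.1; omega
          exact Prod.ext c1 c2
        have := hilbert_eq_last (N + 1) (by omega) (i % 4 ^ (N + 1)) (Nat.mod_lt _ hk) hp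
        rw [e4] at hd
        rw [h4n]
        omega

end Evade

theorem hilbert_evade_at_most_two_blocked (N : ℕ) (hN : 1 ≤ N) (B : Finset ℕ)
    (hcard : B.card ≤ 2) (hB : ∀ b ∈ B, b < 4 ^ N) (h0 : 0 ∉ B)
    (hlast : 4 ^ N - 1 ∉ B) :
    ∃ (m : ℕ) (w : ℕ → ℤ × ℤ), IsEvasionTour N B m w := by
  classical
  set S : Finset (ℤ × ℤ) := B.image (hilbert N) with hSdef
  have hScard : S.card ≤ 2 := le_trans Finset.card_image_le hcard
  have hmemS : ∀ b ∈ B, hilbert N b ∈ S := fun b hb => Finset.mem_image_of_mem _ hb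
  have h00 : (((0 : ℤ), (0 : ℤ)) : ℤ × ℤ) ∉ S := by
    intro hmem
    obtain ⟨b, hb', heq⟩ := Finset.mem_image.mp hmem
    exact h0 (by rw [← Evade.hilbert_eq_zero N hN b (hB b hb') heq]; exact hb')
  have hexS : (((2 : ℤ) ^ N - 1, (0 : ℤ)) : ℤ × ℤ) ∉ S := by
    intro hmem
    obtain ⟨b, hb', heq⟩ := Finset.mem_image.mp hmem
    exact hlast (by rw [← Evade.hilbert_eq_last N hN b (hB b hb') heq]; exact hb')
  have hn2 : (2 : ℤ) ≤ 2 ^ N := by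
    calc (2 : ℤ) = 2 ^ 1 := by norm_num
    _ ≤ 2 ^ N := pow_le_pow_right₀ (by norm_num) hN
  have hgood0 : Evade.Good N S (0, 0) :=
    Evade.good_mk le_rfl (by linarith) le_rfl (by linarith) h00
  have hgoodex : Evade.Good N S (2 ^ N - 1, 0) :=
    Evade.good_mk (by linarith) le_rfl le_rfl (by linarith) hexS
  set pts : List (ℤ × ℤ) :=
    (((Finset.Icc (0 : ℤ) (2 ^ N - 1)) ×ˢ (Finset.Icc (0 : ℤ) (2 ^ N - 1))).filter
      (fun p => p ∉ S)).toList with hptsdef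
  have hpts : ∀ q ∈ pts, Evade.Good N S q := by
    intro q hq
    rw [hptsdef, Finset.mem_toList, Finset.mem_filter, Finset.mem_product,
      Finset.mem_Icc, Finset.mem_Icc] at hq
    exact ⟨⟨hq.1.1.1, hq.1.1.2, hq.1.2.1, hq.1.2.2⟩, hq.2⟩
  obtain ⟨v, l₁, hv, hgw1, hcov⟩ := Evade.walk_through hScard h00 pts hpts (0, 0) hgood0
  obtain ⟨l₂, hgw2⟩ := Evade.reach_gw hv (Evade.reach_of_good hScard h00 hv hgoodex)
  have hgw := Evade.gw_append hgw1 hgw2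
  set L := l₁ ++ l₂ with hLdef
  obtain ⟨hH, hLa, hG, hC⟩ := hgw
  have hne : L ≠ [] := by rintro h; rw [h] at hH; simp at hH
  have hlen : 0 < L.length := List.length_pos_iff.mpr hne
  have hgetD : ∀ (j : ℕ) (hj : j < L.length), L.getD j (0, 0) = L[j]'hj := fun j hj =>
    List.getD_eq_getElem L (0, 0) hj
  have hmemL : ∀ j, j < L.length → L.getD j (0, 0) ∈ L := by
    intro j hj
    exact List.mem_iff_getElem.mpr ⟨j, hj, (hgetD j hj).symm⟩
  have hGoodL : ∀ p ∈ L, Evade.Good N S p := hG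
  have hnotS : ∀ j, j < L.length → ∀ b ∈ B, L.getD j (0, 0) ≠ hilbert N b := by
    intro j hj b hb heq
    exact (hGoodL _ (hmemL j hj)).2 (heq ▸ hmemS b hb)
  refine ⟨L.length - 1, fun j => L.getD j (0, 0), ?_, ?_, ?_, ?_, ?_, ?_⟩
  · -- start
    show L.getD 0 (0, 0) = hilbert N 0
    have h1 := List.head?_eq_head hne
    rw [hH] at h1
    have h2 : L.head hne = (0, 0) := (Option.some_injective _ h1).symm
    rw [Evade.hilbert_zero N, hgetD 0 hlen, List.getElem_zero hlen, h2]
  · -- end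
    show L.getD (L.length - 1) (0, 0) = hilbert N (4 ^ N - 1)
    have h1 := List.getLast?_eq_getLast hne
    rw [hLa] at h1
    have h2 : L.getLast hne = (2 ^ N - 1, 0) := Option.some_injective _ h1.symm
    rw [List.getLast_eq_getElem] at h2
    rw [Evade.hilbert_last N hN, hgetD _ (by omega), h2]
  · intro j hj
    have hj' : j < L.length := by omega
    exact (hGoodL _ (hmemL j hj')).1
  · intro j hj b hb
    exact hnotS j (by omega) b hb
  · intro p hp hpb
    have hpS : p ∉ S := by
      intro hmem
      obtain ⟨b, hb', heq⟩ := Finset.mem_image.mp hmem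
      exact hpb b hb' heq.symm
    have hppts : p ∈ pts := by
      rw [hptsdef, Finset.mem_toList, Finset.mem_filter, Finset.mem_product,
        Finset.mem_Icc, Finset.mem_Icc]
      exact ⟨⟨⟨hp.1, hp.2.1⟩, ⟨hp.2.2.1, hp.2.2.2⟩⟩, hpS⟩
    have hpL : p ∈ L := by
      rw [hLdef]; exact List.mem_append.mpr (Or.inl (hcov p hppts))
    obtain ⟨j, hj, hje⟩ := List.mem_iff_getElem.mp hpL
    refine ⟨j, by omega, ?_⟩
    show L.getD j (0, 0) = p
    rw [hgetD j hj]; exact hje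
  · intro j hj b hb
    have hj1 : j < L.length - 1 := hj
    have hj' : j < L.length := by omega
    have hj'' : j + 1 < L.length := by omega
    have hking : Evade.King (L.getD j (0, 0)) (L.getD (j + 1) (0, 0)) := by
      rw [hgetD j hj', hgetD (j + 1) hj'']
      have := List.isChain_iff_getElem.mp hC j hj''
      simpa using this
    exact Evade.seg_king hking (Ne.symm (hnotS j (by omega) b hb))
      (Ne.symm (hnotS (j + 1) (by omega) b hb))
end
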